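/- On M = (0, ∞) × ℝ⁴ with coordinates (t, x¹, x², y¹, y²), define η = dt, Φ = t · (e^{x¹y¹ + x²y²} dx¹ ∧ dx² + dy¹ ∧ dy²), and γ = d(ln t) + x¹ dy¹ + x² dy². Then: (i) dη = 0; (ii) η ∧ Φ ∧ Φ is nowhere zero on M (a volume form); (iii) dΦ = γ ∧ Φ; and (iv) γ is a contact form on M, i.e. γ ∧ dγ ∧ dγ is nowhere zero. -/

import Mathlib

set_option synthInstance.maxHeartbeats 1000000
set_option maxHeartbeats 1000000

noncomputable section

open ExteriorAlgebra

/-! ### Preamble: differential forms on open subsets of `ℝⁿ`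

A (inhomogeneous) differential form on (an open subset of) `ℝⁿ` is modelled as a map from
`ℝⁿ = Fin n → ℝ` into the exterior algebra `ExteriorAlgebra ℝ (Module.Dual ℝ (Fin n → ℝ))`
of the dual space; a differential `k`-form takes values in the `k`-th exterior power
`⋀[ℝ]^k (Module.Dual ℝ (Fin n → ℝ))`.  The wedge product is multiplication in the exterior
algebra.  To speak about continuity and differentiability we endow this (finite-dimensional)
exterior algebra with a norm, induced by a linear equivalence with `ℝ^d`; all norms on a
finite-dimensional real vector space are equivalent, so the resulting notions of continuous
and smooth differential forms do not depend on this choice.  The exterior derivative is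
defined by the classical coordinate formula `dω = ∑ᵢ dxⁱ ∧ ∂ᵢω`. -/

/-- The `i`-th exterior power of a finite-dimensional space vanishes for `i` larger
than the dimension. -/
theorem exteriorPower_eq_bot_of_finrank_lt {V : Type*} [AddCommGroup V] [Module ℝ V]
    [FiniteDimensional ℝ V] {i : ℕ} (hi : Module.finrank ℝ V < i) :
    ⋀[ℝ]^i V = ⊥ := by
  rw [← ιMulti_span_fixedDegree, Submodule.span_eq_bot]
  rintro x ⟨v, rfl⟩
  refine AlternatingMap.map_linearDependent _ v (fun h => ?_)
  have := h.fintype_card_le_finrank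
  simp only [Fintype.card_fin] at this
  omega

/-- The exterior algebra of a finite-dimensional real vector space is finite-dimensional. -/
instance instFiniteExteriorAlgebra {V : Type*} [AddCommGroup V] [Module ℝ V]
    [FiniteDimensional ℝ V] : Module.Finite ℝ (ExteriorAlgebra ℝ V) := by
  classical
  rw [Module.finite_def]
  set m := Module.finrank ℝ V
  have hfg : ∀ i : ℕ, (⋀[ℝ]^i V).FG := by
    intro i
    induction i with
    | zero =>
      rw [exteriorPower, pow_zero, Submodule.one_eq_span]
      exact Submodule.fg_span_singleton _
    | succ j ih =>
      rw [exteriorPower, pow_succ]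
      exact Submodule.FG.mul ih
        (by rw [← Submodule.map_top]; exact Submodule.FG.map _ Module.Finite.fg_top)
  set F : Submodule ℝ (ExteriorAlgebra ℝ V) := ∑ i ∈ Finset.range (m + 1), ⋀[ℝ]^i V with hF
  have hFfg : F.FG := by
    rw [hF]
    classical
    induction (Finset.range (m + 1)) using Finset.cons_induction with
    | empty => simpa using Submodule.fg_bot
    | cons a s ha ih =>
      rw [Finset.sum_cons, Submodule.add_eq_sup]
      exact Submodule.FG.sup (hfg a) ih
  have hle : ∀ i : ℕ, ⋀[ℝ]^i V ≤ F := by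
    intro i
    by_cases h : i ≤ m
    · exact Finset.single_le_sum (f := fun i => ⋀[ℝ]^i V) (fun j _ => bot_le)
        (Finset.mem_range.2 (by omega))
    · rw [exteriorPower_eq_bot_of_finrank_lt (by omega)]
      exact bot_le
  have htop : (⊤ : Submodule ℝ (ExteriorAlgebra ℝ V)) ≤ F := by
    intro x _
    rw [← DirectSum.sum_support_decompose (fun i : ℕ => ⋀[ℝ]^i V) x]
    exact Submodule.sum_mem _ fun i _ => hle i (DirectSum.decompose (fun i : ℕ => ⋀[ℝ]^i V) x i).2
  exact top_le_iff.mp htop ▸ hFfg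

/-- The algebra of (inhomogeneous) exterior forms on `ℝⁿ`: the exterior algebra of the
dual space of `ℝⁿ`.  A `k`-form on `ℝⁿ` is an element of the submodule
`⋀[ℝ]^k (Module.Dual ℝ (Fin n → ℝ))`. -/
abbrev FormAlgebra (n : ℕ) : Type := ExteriorAlgebra ℝ (Module.Dual ℝ (Fin n → ℝ))

/-- A norm on the (finite-dimensional) algebra of exterior forms on `ℝⁿ`, transported from
`ℝ^d` by a linear equivalence.  All norms on a finite-dimensional real space are equivalent,
so continuity/smoothness of form-valued maps does not depend on this choice. -/
instance instNormedFormAlgebra (n : ℕ) : NormedAddCommGroup (FormAlgebra n) :=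
  NormedAddCommGroup.induced _ _ ((Module.finBasis ℝ (FormAlgebra n)).equivFun.toLinearMap)
    (Module.finBasis ℝ (FormAlgebra n)).equivFun.injective

instance instNormedSpaceFormAlgebra (n : ℕ) : NormedSpace ℝ (FormAlgebra n) :=
  NormedSpace.induced ℝ _ _ ((Module.finBasis ℝ (FormAlgebra n)).equivFun.toLinearMap)

/-- The coordinate 1-forms `dxⁱ` on `ℝⁿ`. -/
def dx {n : ℕ} (i : Fin n) : FormAlgebra n := ExteriorAlgebra.ι ℝ (LinearMap.proj i)

/-- The exterior derivative of a form-valued map on `ℝⁿ`, via the classical coordinate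
formula `dω = ∑ᵢ dxⁱ ∧ ∂ᵢω` (where `∂ᵢ` is the partial derivative in the direction of the
`i`-th standard basis vector). -/
def coordExtDeriv {n : ℕ} (ω : (Fin n → ℝ) → FormAlgebra n) (x : Fin n → ℝ) : FormAlgebra n :=
  ∑ i : Fin n, dx i * fderiv ℝ ω x (Pi.single i 1)

end

/-- `M = (0, ∞) × ℝ⁴ ⊆ ℝ⁵`, with coordinates `(t, x¹, x², y¹, y²) = (v 0, …, v 4)`. -/
def Mset : Set (Fin 5 → ℝ) := {v | 0 < v 0}

/-- The 1-form `η = dt` on `M`. -/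
noncomputable def ηform : (Fin 5 → ℝ) → FormAlgebra 5 := fun _ => dx 0

/-- The 2-form `Φ = t (e^{x¹y¹ + x²y²} dx¹ ∧ dx² + dy¹ ∧ dy²)` on `M`. -/
noncomputable def Φform : (Fin 5 → ℝ) → FormAlgebra 5 := fun v =>
  v 0 • (Real.exp (v 1 * v 3 + v 2 * v 4) • (dx 1 * dx 2) + dx 3 * dx 4)

/-- The 1-form `γ = d(ln t) + x¹ dy¹ + x² dy² = t⁻¹ dt + x¹ dy¹ + x² dy²` on `M`. -/
noncomputable def γform : (Fin 5 → ℝ) → FormAlgebra 5 := fun v =>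
  (v 0)⁻¹ • dx 0 + v 1 • dx 3 + v 2 • dx 4

/-!
STATEMENT 17: on `M = (0,∞) × ℝ⁴`: (i) `dη = 0`; (ii) `η ∧ Φ ∧ Φ` is nowhere zero;
(iii) `dΦ = γ ∧ Φ`; (iv) `γ` is a contact form, i.e. `γ ∧ dγ ∧ dγ` is nowhere zero.
-/
-- auxiliary development, to be inserted before the theorem
set_option maxRecDepth 10000

noncomputable section S17aux
open ExteriorAlgebra

namespace S17

/-- right-associated top monomial -/
def Dtop : FormAlgebra 5 := dx 0 * (dx 1 * (dx 2 * (dx 3 * dx 4)))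

def dualB : Module.Basis (Fin 5) ℝ (Module.Dual ℝ (Fin 5 → ℝ)) := (Pi.basisFun ℝ (Fin 5)).dualBasis

def detf : ∀ i : ℕ, (Module.Dual ℝ (Fin 5 → ℝ)) [⋀^Fin i]→ₗ[ℝ] ℝ :=
  Function.update (fun _ => 0) 5 dualB.det

def Ldet : FormAlgebra 5 →ₗ[ℝ] ℝ := liftAlternating detf

lemma Ldet_Dtop : Ldet Dtop = 1 := by
  have hmulti : ιMulti ℝ 5 (fun i => dualB i) = Dtop := by
    have h : ∀ i : Fin 5, dualB i = LinearMap.proj i := by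
      intro i; ext v; simp [dualB, Pi.basisFun_apply]
    rw [ιMulti_apply]
    simp only [h, List.ofFn_succ, List.prod_cons, List.ofFn_zero, List.prod_nil, Dtop, dx]
    norm_num [Fin.succ]
    rfl
  rw [← hmulti, Ldet, liftAlternating_apply_ιMulti]
  have h5 : detf 5 = dualB.det := Function.update_self _ _ _
  rw [h5]
  exact dualB.det_self

lemma smul_Dtop_ne_zero {c : ℝ} (hc : c ≠ 0) : c • Dtop ≠ 0 := by
  intro h
  have := congrArg Ldet h
  rw [map_smul, Ldet_Dtop, map_zero, smul_eq_mul, mul_one] at this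
  exact hc this

lemma dxc (i : Fin 5) : dx i * dx i = 0 := ι_sq_zero _

lemma dxcx (i : Fin 5) (x : FormAlgebra 5) : dx i * (dx i * x) = 0 := by
  rw [← mul_assoc, dxc, zero_mul]

lemma dxs (i j : Fin 5) : dx j * dx i = -(dx i * dx j) :=
  eq_neg_of_add_eq_zero_left (ι_add_mul_swap _ _)

lemma dxsx (i j : Fin 5) (x : FormAlgebra 5) :
    dx j * (dx i * x) = -(dx i * (dx j * x)) := by
  rw [← mul_assoc, dxs i j, neg_mul, mul_assoc]

lemma dxc2 (i j : Fin 5) : dx j * (dx i * dx j) = 0 := by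
  rw [dxsx, dxc, mul_zero, neg_zero]

lemma dxc2x (i j : Fin 5) (x : FormAlgebra 5) : dx j * (dx i * (dx j * x)) = 0 := by
  rw [dxsx, dxcx, mul_zero, neg_zero]

end S17

end S17aux
noncomputable section S17deriv
open ExteriorAlgebra
namespace S17

abbrev p (i : Fin 5) : (Fin 5 → ℝ) →L[ℝ] ℝ := ContinuousLinearMap.proj i

def Aw : FormAlgebra 5 := dx 1 * dx 2
def Bw : FormAlgebra 5 := dx 3 * dx 4

lemma Φ_eq : Φform = fun y => (y 0 * Real.exp (y 1 * y 3 + y 2 * y 4)) • Aw + y 0 • Bw := by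
  funext y
  simp [Φform, Aw, Bw, smul_add, smul_smul]

lemma hasS (v : Fin 5 → ℝ) :
    HasFDerivAt (fun y : Fin 5 → ℝ => y 1 * y 3 + y 2 * y 4)
      ((v 1 • p 3 + v 3 • p 1) + (v 2 • p 4 + v 4 • p 2)) v :=
  (((hasFDerivAt_apply 1 v).mul (hasFDerivAt_apply 3 v)).add
    ((hasFDerivAt_apply 2 v).mul (hasFDerivAt_apply 4 v)))

lemma hasΦ (v : Fin 5 → ℝ) :
    HasFDerivAt Φform
      (((v 0 • (Real.exp (v 1 * v 3 + v 2 * v 4) •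
          ((v 1 • p 3 + v 3 • p 1) + (v 2 • p 4 + v 4 • p 2)))
        + Real.exp (v 1 * v 3 + v 2 * v 4) • p 0).smulRight Aw)
        + (p 0).smulRight Bw) v := by
  rw [Φ_eq]
  exact (((hasFDerivAt_apply 0 v).mul (hasS v).exp).smul_const Aw).add
    ((hasFDerivAt_apply 0 v).smul_const Bw)

lemma fderivΦ (v w : Fin 5 → ℝ) :
    fderiv ℝ Φform v w =
      (v 0 * Real.exp (v 1 * v 3 + v 2 * v 4) * (v 1 * w 3 + v 3 * w 1 + (v 2 * w 4 + v 4 * w 2))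
        + Real.exp (v 1 * v 3 + v 2 * v 4) * w 0) • Aw + w 0 • Bw := by
  rw [(hasΦ v).fderiv]
  simp [smul_smul, mul_add]
  ring_nf

end S17
end S17deriv
noncomputable section S17main
open ExteriorAlgebra
namespace S17

lemma γ_eq : γform = fun y : Fin 5 → ℝ => (y 0)⁻¹ • dx 0 + (y 1 • dx 3 + y 2 • dx 4) := by
  funext y; simp [γform, add_assoc]

lemma hasγ (v : Fin 5 → ℝ) (h : v 0 ≠ 0) :
    HasFDerivAt γform
      ((-(((v 0) ^ 2)⁻¹ • p 0)).smulRight (dx 0) + ((p 1).smulRight (dx 3)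
        + (p 2).smulRight (dx 4))) v := by
  have h0 : HasFDerivAt (fun y : Fin 5 → ℝ => (y 0)⁻¹) (-(((v 0) ^ 2)⁻¹ • p 0)) v := by
    have := (hasDerivAt_inv h).comp_hasFDerivAt (𝕜 := ℝ) v (hasFDerivAt_apply 0 v)
    simpa [neg_smul, Function.comp_def] using this
  rw [γ_eq]
  exact ((h0.smul_const (dx 0)).add
    (((hasFDerivAt_apply 1 v).smul_const (dx 3)).add
      ((hasFDerivAt_apply 2 v).smul_const (dx 4))))

lemma fderivγ (v : Fin 5 → ℝ) (h : v 0 ≠ 0) (w : Fin 5 → ℝ) :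
    fderiv ℝ γform v w = (-((v 0) ^ 2)⁻¹ * w 0) • dx 0 + w 1 • dx 3 + w 2 • dx 4 := by
  rw [(hasγ v h).fderiv]
  simp [add_assoc, neg_smul, smul_smul]

lemma coordExtDerivγ (v : Fin 5 → ℝ) (h : v 0 ≠ 0) :
    coordExtDeriv γform v = dx 1 * dx 3 + dx 2 * dx 4 := by
  rw [coordExtDeriv]
  simp only [Fin.sum_univ_five, fderivγ v h]
  simp [Pi.single_apply, mul_add, mul_smul_comm, dxc, dxcx, dxc2, dxc2x]

lemma coordExtDerivΦ (v : Fin 5 → ℝ) :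
    coordExtDeriv Φform v =
      Real.exp (v 1 * v 3 + v 2 * v 4) • (dx 0 * Aw) + dx 0 * Bw
        + (v 0 * Real.exp (v 1 * v 3 + v 2 * v 4) * v 1) • (dx 3 * Aw)
        + (v 0 * Real.exp (v 1 * v 3 + v 2 * v 4) * v 2) • (dx 4 * Aw) := by
  rw [coordExtDeriv]
  simp only [Fin.sum_univ_five, fderivΦ]
  simp [Pi.single_apply, Aw, Bw, mul_add, mul_smul_comm, dxc, dxcx, dxc2, dxc2x]

end S17
end S17main
open S17

theorem statement17 :
    (∀ v ∈ Mset, coordExtDeriv ηform v = 0) ∧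
    (∀ v ∈ Mset, ηform v * Φform v * Φform v ≠ 0) ∧
    (∀ v ∈ Mset, coordExtDeriv Φform v = γform v * Φform v) ∧
    (∀ v ∈ Mset, γform v * coordExtDeriv γform v * coordExtDeriv γform v ≠ 0) := by
  refine ⟨?_, ?_, ?_, ?_⟩
  · intro v _
    simp [coordExtDeriv, show ηform = fun _ => dx 0 from rfl, fderiv_const]
  · intro v hv
    have h : v 0 ≠ 0 := ne_of_gt (show 0 < v 0 from hv)
    have key : ηform v * Φform v * Φform v
        = (2 * v 0 ^ 2 * Real.exp (v 1 * v 3 + v 2 * v 4)) • Dtop := by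
      simp [ηform, Φform, Dtop, mul_add, add_mul, smul_mul_assoc, mul_smul_comm, smul_smul,
        mul_assoc, dxc, dxcx, dxc2, dxc2x,
        dxs 0 1, dxs 0 2, dxs 0 3, dxs 0 4, dxs 1 2, dxs 1 3, dxs 1 4, dxs 2 3, dxs 2 4, dxs 3 4,
        dxsx 0 1, dxsx 0 2, dxsx 0 3, dxsx 0 4, dxsx 1 2, dxsx 1 3, dxsx 1 4, dxsx 2 3,
        dxsx 2 4, dxsx 3 4]
      match_scalars
      ring
    rw [key]
    exact smul_Dtop_ne_zero (by positivity)
  · intro v hv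
    have h : v 0 ≠ 0 := ne_of_gt (show 0 < v 0 from hv)
    rw [coordExtDerivΦ v]
    simp [γform, Φform, Aw, Bw, mul_add, add_mul, smul_mul_assoc, mul_smul_comm, smul_smul,
      mul_assoc, dxc, dxcx, dxc2, dxc2x]
    match_scalars <;> field_simp
  · intro v hv
    have h : v 0 ≠ 0 := ne_of_gt (show 0 < v 0 from hv)
    rw [coordExtDerivγ v h]
    have key : γform v * (dx 1 * dx 3 + dx 2 * dx 4) * (dx 1 * dx 3 + dx 2 * dx 4)
        = (-(2 * (v 0)⁻¹)) • Dtop := by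
      simp [γform, Dtop, mul_add, add_mul, smul_mul_assoc, mul_smul_comm, smul_smul,
        mul_assoc, dxc, dxcx, dxc2, dxc2x,
        dxs 0 1, dxs 0 2, dxs 0 3, dxs 0 4, dxs 1 2, dxs 1 3, dxs 1 4, dxs 2 3, dxs 2 4, dxs 3 4,
        dxsx 0 1, dxsx 0 2, dxsx 0 3, dxsx 0 4, dxsx 1 2, dxsx 1 3, dxsx 1 4, dxsx 2 3,
        dxsx 2 4, dxsx 3 4]
      match_scalars
      ring
    rw [key]
    exact smul_Dtop_ne_zero (by simp [h])
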